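/- For every n ≥ 1 and 0 ≤ k ≤ n, the 3-element ai-semiring S_7 satisfies the inequality x₁x₂⋯xₙxₙ₊₁ ≤ x₁x₂⋯xₙ + Σ_{i=1}^{k} xᵢxₙ₊₁ + Σ_{i=k+1}^{n} xᵢxₙ₊₁yᵢ, where u ≤ v means u + v = v. -/

import Mathlib

/-- Addition of S_7: x + x = x and x + y = ∞ for x ≠ y; encoding: 0 = 1, 1 = a, 2 = ∞. -/
def add7 (x y : Fin 3) : Fin 3 := if x = y then x else 2

/-- Multiplication table of S_7; encoding: 0 = 1, 1 = a, 2 = ∞.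
Note 0 (the element 1) is a multiplicative identity. -/
def mul7 (x y : Fin 3) : Fin 3 :=
  ![![0, 1, 2],
    ![1, 2, 2],
    ![2, 2, 2]] x y

lemma add7_two (x : Fin 3) : add7 x 2 = 2 := by
  unfold add7; split <;> simp_all

lemma add7_self (x : Fin 3) : add7 x x = x := by simp [add7]

lemma fin3 : ∀ x : Fin 3, x = 0 ∨ x = 1 ∨ x = 2 := by decide

lemma mul7_zero_right : ∀ x : Fin 3, mul7 x 0 = x := by decide

lemma term_t1_ne0 : ∀ a y : Fin 3, mul7 a 1 ≠ 0 ∧ mul7 (mul7 a 1) y ≠ 0 := by decide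

lemma term_t1_eq1 : ∀ a y : Fin 3,
    (mul7 a 1 = 1 → a = 0) ∧ (mul7 (mul7 a 1) y = 1 → a = 0) := by decide

lemma term_t2 : ∀ a y : Fin 3, mul7 a 2 = 2 ∧ mul7 (mul7 a 2) y = 2 := by decide

lemma foldr_add7_eq (L : List (Fin 3)) (b : Fin 3) (h : ∀ x ∈ L, x = b) :
    L.foldr add7 b = b := by
  induction L with
  | nil => rfl
  | cons a l ih =>
    simp only [List.foldr_cons]
    rw [ih (fun x hx => h x (List.mem_cons_of_mem _ hx)), h a List.mem_cons_self,
      add7_self]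

lemma foldr_add7_two (L : List (Fin 3)) (b : Fin 3) (h : ∃ x ∈ L, x ≠ b) :
    L.foldr add7 b = 2 := by
  induction L with
  | nil => simp at h
  | cons a l ih =>
    simp only [List.foldr_cons]
    by_cases hl : ∃ x ∈ l, x ≠ b
    · rw [ih hl, add7_two]
    · push_neg at hl
      rw [foldr_add7_eq l b hl]
      obtain ⟨x, hx, hxb⟩ := h
      rcases List.mem_cons.1 hx with rfl | hx'
      · simp [add7, hxb]
      · exact absurd (hl x hx') hxb

lemma foldr_mul7_zero (L : List (Fin 3)) (h : ∀ x ∈ L, x = 0) :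
    L.foldr mul7 0 = 0 := by
  induction L with
  | nil => rfl
  | cons a l ih =>
    simp only [List.foldr_cons]
    rw [ih (fun x hx => h x (List.mem_cons_of_mem _ hx)), h a List.mem_cons_self]
    rfl

/-- For every n ≥ 1 and 0 ≤ k ≤ n, S_7 satisfies
x₁⋯xₙxₙ₊₁ ≤ x₁⋯xₙ + Σ_{i=1}^{k} xᵢxₙ₊₁ + Σ_{i=k+1}^{n} xᵢxₙ₊₁yᵢ,
where u ≤ v means u + v = v. -/
theorem stmt19 : ∀ n : ℕ, 1 ≤ n → ∀ k : ℕ, k ≤ n →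
    ∀ (s : Fin n → Fin 3) (t : Fin 3) (ys : Fin n → Fin 3),
    add7 (mul7 ((List.ofFn s).foldr mul7 0) t)
      ((List.ofFn (fun i : Fin n =>
          if (i : ℕ) < k then mul7 (s i) t else mul7 (mul7 (s i) t) (ys i))).foldr add7
        ((List.ofFn s).foldr mul7 0))
    = (List.ofFn (fun i : Fin n =>
          if (i : ℕ) < k then mul7 (s i) t else mul7 (mul7 (s i) t) (ys i))).foldr add7
        ((List.ofFn s).foldr mul7 0) := by
  intro n hn k hk s t ys
  by_cases hall : ∀ x ∈ List.ofFn (fun i : Fin n =>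
      if (i : ℕ) < k then mul7 (s i) t else mul7 (mul7 (s i) t) (ys i)),
      x = (List.ofFn s).foldr mul7 0
  · rw [foldr_add7_eq _ _ hall]
    set P : Fin 3 := (List.ofFn s).foldr mul7 0 with hP
    have hterm : ∀ i : Fin n,
        (if (i : ℕ) < k then mul7 (s i) t else mul7 (mul7 (s i) t) (ys i)) = P := by
      intro i
      exact hall _ (by rw [List.mem_ofFn]; exact ⟨i, rfl⟩)
    have i0 : Fin n := ⟨0, hn⟩
    rcases fin3 t with rfl | rfl | rfl
    · rw [mul7_zero_right, add7_self]
    · rcases fin3 P with hP0 | hP1 | hP2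
      · exfalso
        have h0 := hterm i0
        rw [hP0] at h0
        split at h0
        · exact (term_t1_ne0 (s i0) (ys i0)).1 h0
        · exact (term_t1_ne0 (s i0) (ys i0)).2 h0
      · exfalso
        have hs : ∀ i : Fin n, s i = 0 := by
          intro i
          have h1 := hterm i
          rw [hP1] at h1
          split at h1
          · exact (term_t1_eq1 (s i) (ys i)).1 h1
          · exact (term_t1_eq1 (s i) (ys i)).2 h1
        have hzero : P = 0 := by
          rw [hP]
          apply foldr_mul7_zero
          intro x hx
          rw [List.mem_ofFn] at hx
          obtain ⟨i, rfl⟩ := hx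
          exact hs i
        rw [hP1] at hzero
        exact absurd hzero (by decide)
      · rw [hP2]; decide
    · have hP2 : P = 2 := by
        have h0 := hterm i0
        rw [← h0]
        split
        · exact (term_t2 (s i0) (ys i0)).1
        · exact (term_t2 (s i0) (ys i0)).2
      rw [hP2]; decide
  · push_neg at hall
    rw [foldr_add7_two _ _ hall, add7_two]
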